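/- In the long-string limit ω → 1⁺ one has S(ω) → +∞, E(ω) − S(ω) → +∞, and the anomalous dimension exhibits logarithmic scaling: lim_{ω → 1⁺} (E(ω) − S(ω)) / ln S(ω) = √λ/π. -/

import Mathlib

noncomputable section

open Real

/-- Complete elliptic integral of the first kind,
K(m) = ∫₀^{π/2} (1 − m sin²θ)^{−1/2} dθ. -/
def ellK (m : ℝ) : ℝ := ∫ θ in (0:ℝ)..(π / 2), (Real.sqrt (1 - m * Real.sin θ ^ 2))⁻¹

/-- Complete elliptic integral of the second kind,
E(m) = ∫₀^{π/2} (1 − m sin²θ)^{1/2} dθ. -/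
def ellE (m : ℝ) : ℝ := ∫ θ in (0:ℝ)..(π / 2), Real.sqrt (1 - m * Real.sin θ ^ 2)


/-- The GKP energy E(ω) = (2√λ/π)·(ω/(ω²−1))·E(1/ω²), with √λ = L². -/
def gkpE (L ω : ℝ) : ℝ := (2 * L ^ 2 / π) * (ω / (ω ^ 2 - 1)) * ellE (1 / ω ^ 2)

/-- The GKP spin S(ω) = (2√λ/π)·((ω²/(ω²−1))·E(1/ω²) − K(1/ω²)), with √λ = L². -/
def gkpS (L ω : ℝ) : ℝ :=
  (2 * L ^ 2 / π) * ((ω ^ 2 / (ω ^ 2 - 1)) * ellE (1 / ω ^ 2) - ellK (1 / ω ^ 2))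



section Helpers
open Filter Topology intervalIntegral


lemma contE (m : ℝ) : Continuous fun θ : ℝ => Real.sqrt (1 - m * Real.sin θ ^ 2) := by
  fun_prop

lemma Xpos (m : ℝ) (hm1 : m < 1) (hm0 : 0 ≤ m) (θ : ℝ) : 0 < 1 - m * Real.sin θ ^ 2 := by
  nlinarith [Real.sin_sq_le_one θ, sq_nonneg (Real.sin θ)]

lemma contK (m : ℝ) (hm1 : m < 1) (hm0 : 0 ≤ m) :
    Continuous fun θ : ℝ => (Real.sqrt (1 - m * Real.sin θ ^ 2))⁻¹ := by
  apply (contE m).inv₀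
  intro θ
  exact ne_of_gt (Real.sqrt_pos.2 (Xpos m hm1 hm0 θ))

lemma ellE_le (m : ℝ) (hm : 0 ≤ m) : ellE m ≤ π / 2 := by
  have h : ellE m ≤ ∫ _ in (0:ℝ)..(π/2), (1:ℝ) := by
    apply integral_mono_on (by positivity) ((contE m).intervalIntegrable _ _)
      (intervalIntegrable_const)
    intro x hx
    rw [Real.sqrt_le_one]
    nlinarith [sq_nonneg (Real.sin x)]
  simpa using h

lemma one_le_ellE (m : ℝ) (hm : m ≤ 1) : 1 ≤ ellE m := by
  have h : ∫ θ in (0:ℝ)..(π/2), Real.cos θ ≤ ellE m := by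
    apply integral_mono_on (by positivity)
      (Real.continuous_cos.intervalIntegrable _ _) ((contE m).intervalIntegrable _ _)
    intro x hx
    have hpi := Real.pi_pos
    have hc : 0 ≤ Real.cos x := Real.cos_nonneg_of_mem_Icc ⟨by linarith [hx.1], hx.2⟩
    have h2 : Real.cos x ^ 2 ≤ 1 - m * Real.sin x ^ 2 := by
      have := Real.sin_sq_add_cos_sq x
      nlinarith [sq_nonneg (Real.sin x)]
    calc Real.cos x = Real.sqrt (Real.cos x ^ 2) := by rw [Real.sqrt_sq hc]
    _ ≤ _ := Real.sqrt_le_sqrt h2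
  simpa using h

lemma ellK_nonneg (m : ℝ) : 0 ≤ ellK m := by
  apply intervalIntegral.integral_nonneg (by positivity)
  intro x hx; positivity


lemma cos_pos_on (t : ℝ) (ht0 : 0 ≤ t) (ht : t < π/2) {x : ℝ} (hx : x ∈ Set.uIcc 0 t) :
    0 < Real.cos x := by
  rw [Set.uIcc_of_le ht0] at hx
  apply Real.cos_pos_of_mem_Ioo
  constructor
  · linarith [hx.1, Real.pi_pos]
  · linarith [hx.2]

lemma integral_sec_sq (t : ℝ) (ht0 : 0 ≤ t) (ht : t < π/2) :
    ∫ θ in (0:ℝ)..t, (Real.cos θ ^ 2)⁻¹ = Real.tan t := by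
  have h := integral_eq_sub_of_hasDerivAt (f := Real.tan)
    (f' := fun θ : ℝ => (Real.cos θ ^ 2)⁻¹) (a := 0) (b := t)
    (fun x hx => by simpa [one_div] using Real.hasDerivAt_tan (ne_of_gt (cos_pos_on t ht0 ht hx)))
    ?_
  · simpa using h
  · apply ContinuousOn.intervalIntegrable
    apply ContinuousOn.inv₀ (by fun_prop)
    intro x hx
    exact ne_of_gt (pow_pos (cos_pos_on t ht0 ht hx) 2)

lemma integral_sec (t : ℝ) (ht0 : 0 ≤ t) (ht : t < π/2) :
    ∫ θ in (0:ℝ)..t, (Real.cos θ)⁻¹ = Real.log ((1 + Real.sin t) / Real.cos t) := by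
  have h := integral_eq_sub_of_hasDerivAt
    (f := fun θ : ℝ => Real.log ((1 + Real.sin θ) / Real.cos θ))
    (f' := fun θ : ℝ => (Real.cos θ)⁻¹) (a := 0) (b := t) ?_ ?_
  · simpa using h
  · intro x hx
    have hc := cos_pos_on t ht0 ht hx
    have hs : -1 < Real.sin x := by nlinarith [Real.neg_one_le_sin x, Real.sin_sq_add_cos_sq x]
    have hne : (1 + Real.sin x) / Real.cos x ≠ 0 := ne_of_gt (div_pos (by linarith) hc)
    have hd : HasDerivAt (fun θ : ℝ => (1 + Real.sin θ) / Real.cos θ)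
        ((Real.cos x * Real.cos x - (1 + Real.sin x) * (-Real.sin x)) / Real.cos x ^ 2) x := by
      exact (((Real.hasDerivAt_sin x).const_add 1).div (Real.hasDerivAt_cos x) (ne_of_gt hc))
    have := hd.log hne
    refine this.congr_deriv ?_
    have h1 := Real.sin_sq_add_cos_sq x
    have h2 : Real.cos x * Real.cos x - (1 + Real.sin x) * (-Real.sin x) = 1 + Real.sin x := by
      nlinarith [h1]
    rw [h2]
    have h3 : (1 + Real.sin x) ≠ 0 := by linarith
    field_simp [h3, ne_of_gt hc]
  · apply ContinuousOn.intervalIntegrable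
    apply ContinuousOn.inv₀ (by fun_prop)
    intro x hx
    exact ne_of_gt (cos_pos_on t ht0 ht hx)




section KBounds

variable {m : ℝ} (hm : 1/2 ≤ m) (hm1 : m < 1)

lemma Xeq (θ : ℝ) : 1 - m * Real.sin θ ^ 2 = Real.cos θ ^ 2 + (1-m) * Real.sin θ ^ 2 := by
  have := Real.sin_sq_add_cos_sq θ
  linarith [mul_comm m (Real.sin θ ^ 2)]

include hm hm1

lemma setup :
    0 < 1 - m ∧ 1 - m ≤ 1/2 ∧ 0 < Real.sqrt (1-m) ∧ Real.sqrt (1-m) < 1 ∧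
    Real.cos (Real.arccos (Real.sqrt (1-m))) = Real.sqrt (1-m) ∧
    Real.sin (Real.arccos (Real.sqrt (1-m))) = Real.sqrt m ∧
    0 ≤ Real.arccos (Real.sqrt (1-m)) ∧ Real.arccos (Real.sqrt (1-m)) < π/2 := by
  have hd0 : 0 < 1 - m := by linarith
  have hdh : 1 - m ≤ 1/2 := by linarith
  have hs0 : 0 < Real.sqrt (1-m) := Real.sqrt_pos.2 hd0
  have hs1 : Real.sqrt (1-m) < 1 := by
    have := Real.sqrt_lt_sqrt (by linarith : (0:ℝ) ≤ 1-m) (by linarith : 1-m < 1)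
    rwa [Real.sqrt_one] at this
  have hct : Real.cos (Real.arccos (Real.sqrt (1-m))) = Real.sqrt (1-m) :=
    Real.cos_arccos (by linarith) hs1.le
  have hst : Real.sin (Real.arccos (Real.sqrt (1-m))) = Real.sqrt m := by
    rw [Real.sin_arccos, Real.sq_sqrt hd0.le]
    norm_num
  have ht0 : 0 ≤ Real.arccos (Real.sqrt (1-m)) := Real.arccos_nonneg _
  have htle : Real.arccos (Real.sqrt (1-m)) ≤ π/2 := Real.arccos_le_pi_div_two.2 hs0.le
  have htlt : Real.arccos (Real.sqrt (1-m)) < π/2 := by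
    rcases lt_or_eq_of_le htle with h | h
    · exact h
    · exfalso
      have : Real.cos (Real.arccos (Real.sqrt (1-m))) = 0 := by rw [h, Real.cos_pi_div_two]
      rw [hct] at this; linarith
  exact ⟨hd0, hdh, hs0, hs1, hct, hst, ht0, htlt⟩

lemma ellK_split :
    ellK m = (∫ θ in (0:ℝ)..(Real.arccos (Real.sqrt (1-m))),
        (Real.sqrt (1 - m * Real.sin θ ^ 2))⁻¹) +
      ∫ θ in (Real.arccos (Real.sqrt (1-m)))..(π/2),
        (Real.sqrt (1 - m * Real.sin θ ^ 2))⁻¹ := by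
  have hc := contK m hm1 (by linarith)
  exact (integral_add_adjacent_intervals (hc.intervalIntegrable _ _)
    (hc.intervalIntegrable _ _)).symm

lemma ellK_lb : -(Real.log (1-m))/2 - 1 ≤ ellK m := by
  obtain ⟨hd0, hdh, hs0, hs1, hct, hst, ht0, htlt⟩ := setup hm hm1
  set s := Real.sqrt (1-m) with hs
  set t := Real.arccos s with htdef
  have hm0 : (0:ℝ) ≤ m := by linarith
  -- pointwise bound on [0, t]
  have hpt : ∀ x ∈ Set.Icc (0:ℝ) t, (Real.cos x)⁻¹ - s * (Real.cos x ^ 2)⁻¹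
      ≤ (Real.sqrt (1 - m * Real.sin x ^ 2))⁻¹ := by
    intro x hx
    have hcge : s ≤ Real.cos x := by
      rw [← hct]
      apply Real.cos_le_cos_of_nonneg_of_le_pi hx.1 (by linarith [Real.pi_pos]) hx.2
    have hc0 : 0 < Real.cos x := lt_of_lt_of_le hs0 hcge
    have hXeq := Xeq (m := m) x
    have hsin2 : Real.sin x ^ 2 ≤ 1 := Real.sin_sq_le_one x
    have hX0 : 0 < 1 - m * Real.sin x ^ 2 := by nlinarith [sq_nonneg (Real.sin x)]
    have hXle : 1 - m * Real.sin x ^ 2 ≤ (Real.cos x + s) ^ 2 := by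
      have hs2 : s ^ 2 = 1 - m := Real.sq_sqrt hd0.le
      nlinarith [sq_nonneg (Real.sin x)]
    have hsqle : Real.sqrt (1 - m * Real.sin x ^ 2) ≤ Real.cos x + s := by
      calc Real.sqrt (1 - m * Real.sin x ^ 2) ≤ Real.sqrt ((Real.cos x + s)^2) :=
        Real.sqrt_le_sqrt hXle
      _ = Real.cos x + s := Real.sqrt_sq (by positivity)
    have h1 : (Real.cos x + s)⁻¹ ≤ (Real.sqrt (1 - m * Real.sin x ^ 2))⁻¹ :=
      inv_anti₀ (Real.sqrt_pos.2 hX0) hsqle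
    have h2 : (Real.cos x)⁻¹ - s * (Real.cos x ^ 2)⁻¹ ≤ (Real.cos x + s)⁻¹ := by
      have he : (Real.cos x)⁻¹ - s * (Real.cos x ^ 2)⁻¹ = (Real.cos x - s)/(Real.cos x ^ 2) := by
        field_simp
      rw [he, inv_eq_one_div, div_le_div_iff₀ (by positivity) (by positivity)]
      nlinarith
    linarith
  -- integral of the lower bound
  have hint : ∫ x in (0:ℝ)..t, ((Real.cos x)⁻¹ - s * (Real.cos x ^ 2)⁻¹)
      = Real.log ((1 + Real.sin t) / Real.cos t) - s * Real.tan t := by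
    rw [intervalIntegral.integral_sub, integral_sec t ht0 htlt,
      intervalIntegral.integral_const_mul, integral_sec_sq t ht0 htlt]
    · apply ContinuousOn.intervalIntegrable
      apply ContinuousOn.inv₀ (by fun_prop)
      intro x hx
      exact ne_of_gt (cos_pos_on t ht0 htlt hx)
    · apply IntervalIntegrable.const_mul
      apply ContinuousOn.intervalIntegrable
      apply ContinuousOn.inv₀ (by fun_prop)
      intro x hx
      exact ne_of_gt (pow_pos (cos_pos_on t ht0 htlt hx) 2)
  have hmono : ∫ x in (0:ℝ)..t, ((Real.cos x)⁻¹ - s * (Real.cos x ^ 2)⁻¹)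
      ≤ ∫ θ in (0:ℝ)..t, (Real.sqrt (1 - m * Real.sin θ ^ 2))⁻¹ := by
    apply integral_mono_on ht0 _ ((contK m hm1 hm0).intervalIntegrable _ _) hpt
    apply IntervalIntegrable.sub
    · apply ContinuousOn.intervalIntegrable
      apply ContinuousOn.inv₀ (by fun_prop)
      intro x hx
      exact ne_of_gt (cos_pos_on t ht0 htlt hx)
    · apply IntervalIntegrable.const_mul
      apply ContinuousOn.intervalIntegrable
      apply ContinuousOn.inv₀ (by fun_prop)
      intro x hx
      exact ne_of_gt (pow_pos (cos_pos_on t ht0 htlt hx) 2)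
  have hrest : 0 ≤ ∫ θ in t..(π/2), (Real.sqrt (1 - m * Real.sin θ ^ 2))⁻¹ := by
    apply intervalIntegral.integral_nonneg htlt.le
    intro x hx; positivity
  -- value estimates
  have hstan : s * Real.tan t = Real.sin t := by
    rw [Real.tan_eq_sin_div_cos, hct]
    field_simp
  have hsin1 : Real.sin t ≤ 1 := Real.sin_le_one t
  have hlog : -(Real.log (1-m))/2 ≤ Real.log ((1 + Real.sin t) / Real.cos t) := by
    have hsin0 : 0 ≤ Real.sin t := by rw [hst]; positivity
    have h1 : (1:ℝ)/s ≤ (1 + Real.sin t) / Real.cos t := by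
      rw [hct]
      gcongr
      linarith
    have h2 : Real.log (1/s) ≤ Real.log ((1 + Real.sin t) / Real.cos t) :=
      Real.log_le_log (by positivity) h1
    have h3 : Real.log (1/s) = -(Real.log (1-m))/2 := by
      rw [one_div, Real.log_inv, hs, Real.log_sqrt hd0.le]
      ring
    linarith
  rw [ellK_split hm hm1]
  have := hlog
  nlinarith [hmono, hrest, hint, hstan, hsin1, hlog]
end KBounds




lemma ellK_ub {m : ℝ} (hm : 1/2 ≤ m) (hm1 : m < 1) :
    ellK m ≤ -(Real.log (1-m))/2 + Real.log 2 + π := by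
  obtain ⟨hd0, hdh, hs0, hs1, hct, hst, ht0, htlt⟩ := setup hm hm1
  set s := Real.sqrt (1-m) with hs
  set t := Real.arccos s with htdef
  have hm0 : (0:ℝ) ≤ m := by linarith
  have hpi := Real.pi_pos
  -- piece 1
  have hp1 : (∫ θ in (0:ℝ)..t, (Real.sqrt (1 - m * Real.sin θ ^ 2))⁻¹)
      ≤ Real.log 2 + -(Real.log (1-m))/2 := by
    have hmono : (∫ θ in (0:ℝ)..t, (Real.sqrt (1 - m * Real.sin θ ^ 2))⁻¹)
        ≤ ∫ x in (0:ℝ)..t, (Real.cos x)⁻¹ := by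
      apply integral_mono_on ht0 ((contK m hm1 hm0).intervalIntegrable _ _)
      · apply ContinuousOn.intervalIntegrable
        apply ContinuousOn.inv₀ (by fun_prop)
        intro x hx
        exact ne_of_gt (cos_pos_on t ht0 htlt hx)
      · intro x hx
        have hcge : s ≤ Real.cos x := by
          rw [← hct]
          exact Real.cos_le_cos_of_nonneg_of_le_pi hx.1 (by linarith) hx.2
        have hc0 : 0 < Real.cos x := lt_of_lt_of_le hs0 hcge
        have hXge : Real.cos x ^ 2 ≤ 1 - m * Real.sin x ^ 2 := by
          rw [Xeq x]
          nlinarith [sq_nonneg (Real.sin x)]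
        have : Real.cos x ≤ Real.sqrt (1 - m * Real.sin x ^ 2) := by
          calc Real.cos x = Real.sqrt (Real.cos x ^ 2) := (Real.sqrt_sq hc0.le).symm
          _ ≤ _ := Real.sqrt_le_sqrt hXge
        exact inv_anti₀ hc0 this
    have hval : ∫ x in (0:ℝ)..t, (Real.cos x)⁻¹ = Real.log ((1 + Real.sin t) / Real.cos t) :=
      integral_sec t ht0 htlt
    have hlog : Real.log ((1 + Real.sin t) / Real.cos t) ≤ Real.log (2 / s) := by
      have hpos : 0 < (1 + Real.sin t) / Real.cos t := by
        rw [hct]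
        apply div_pos _ hs0
        rw [hst]; positivity
      apply Real.log_le_log hpos
      rw [hct]
      gcongr
      linarith [Real.sin_le_one t]
    have h3 : Real.log (2/s) = Real.log 2 + -(Real.log (1-m))/2 := by
      rw [Real.log_div (by norm_num) (ne_of_gt hs0), hs, Real.log_sqrt hd0.le]
      ring
    linarith
  -- piece 2
  have hp2 : (∫ θ in t..(π/2), (Real.sqrt (1 - m * Real.sin θ ^ 2))⁻¹) ≤ π := by
    have hC0 : 0 < Real.sqrt ((1-m)/2) := Real.sqrt_pos.2 (by linarith)
    have hmono : (∫ θ in t..(π/2), (Real.sqrt (1 - m * Real.sin θ ^ 2))⁻¹)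
        ≤ ∫ _ in t..(π/2), (Real.sqrt ((1-m)/2))⁻¹ := by
      apply integral_mono_on htlt.le ((contK m hm1 hm0).intervalIntegrable _ _)
        intervalIntegrable_const
      intro x hx
      have hsinx : Real.sin t ≤ Real.sin x := by
        apply Real.strictMonoOn_sin.monotoneOn ⟨by linarith, by linarith [hx.2]⟩
          ⟨by linarith [hx.1], hx.2⟩ hx.1
      have hsint0 : 0 ≤ Real.sin t := by rw [hst]; positivity
      have hsq : Real.sin t ^ 2 ≤ Real.sin x ^ 2 := by nlinarith
      have hst2 : Real.sin t ^ 2 = m := by rw [hst, Real.sq_sqrt hm0]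
      have hXge : (1-m)/2 ≤ 1 - m * Real.sin x ^ 2 := by
        rw [Xeq x]
        nlinarith [sq_nonneg (Real.cos x)]
      have : Real.sqrt ((1-m)/2) ≤ Real.sqrt (1 - m * Real.sin x ^ 2) :=
        Real.sqrt_le_sqrt hXge
      exact inv_anti₀ hC0 this
    have hlen : π/2 - t ≤ (π/2) * s := by
      have hj := Real.mul_le_sin (x := π/2 - t) (by linarith) (by linarith)
      rw [Real.sin_pi_div_two_sub, hct] at hj
      have h1 := mul_le_mul_of_nonneg_left hj (by positivity : (0:ℝ) ≤ π/2)
      have h2 : (π/2) * (2/π * (π/2 - t)) = π/2 - t := by field_simp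
      linarith
    have hval : (∫ _ in t..(π/2), (Real.sqrt ((1-m)/2))⁻¹)
        = (π/2 - t) * (Real.sqrt ((1-m)/2))⁻¹ := by
      simp [smul_eq_mul]
      ring
    have hsC : s * (Real.sqrt ((1-m)/2))⁻¹ = Real.sqrt 2 := by
      rw [Real.sqrt_div hd0.le 2, ← hs]
      have h2 : Real.sqrt 2 ≠ 0 := by positivity
      field_simp
    have hs2 : Real.sqrt 2 ≤ 2 := by
      nlinarith [Real.sq_sqrt (by norm_num : (0:ℝ) ≤ 2), Real.sqrt_nonneg 2]
    calc (∫ θ in t..(π/2), (Real.sqrt (1 - m * Real.sin θ ^ 2))⁻¹)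
        ≤ (π/2 - t) * (Real.sqrt ((1-m)/2))⁻¹ := by rw [← hval]; exact hmono
      _ ≤ (π/2) * s * (Real.sqrt ((1-m)/2))⁻¹ := by gcongr
      _ = (π/2) * Real.sqrt 2 := by rw [mul_assoc, hsC]
      _ ≤ π := by nlinarith
  rw [ellK_split hm hm1]
  linarith




lemma perOmega (L ω : ℝ) (hL : 0 < L) (h1 : 1 < ω) (h2 : ω < 9/8) :
    ((2*L^2/π)/2) * (1 - 1/ω^2)⁻¹ + (2*L^2/π)*(1/2 - Real.log 2 - π) ≤ gkpS L ω ∧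
    gkpS L ω ≤ L^2 * (1 - 1/ω^2)⁻¹ ∧
    ((2*L^2/π)/2) * (-Real.log (1 - 1/ω^2)) - (2*L^2/π)*(1 + π/2)
      ≤ gkpE L ω - gkpS L ω ∧
    gkpE L ω - gkpS L ω
      ≤ ((2*L^2/π)/2) * (-Real.log (1 - 1/ω^2)) + (2*L^2/π)*(Real.log 2 + π) := by
  have hπ := Real.pi_pos
  have hc : 0 < 2*L^2/π := by positivity
  have hω0 : (0:ℝ) < ω := by linarith
  have hω2 : (1:ℝ) < ω^2 := by nlinarith
  have hω2' : ω^2 < 2 := by nlinarith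
  have hm : 1/2 ≤ 1/ω^2 := by
    rw [div_le_div_iff₀ (by norm_num) (by positivity)]; linarith
  have hm1 : 1/ω^2 < 1 := by
    rw [div_lt_one (by positivity)]; linarith
  have hd0 : 0 < 1 - 1/ω^2 := by linarith
  set x := (1 - 1/ω^2)⁻¹ with hxdef
  set g := -Real.log (1 - 1/ω^2) with hgdef
  set E := ellE (1/ω^2) with hEdef
  set K := ellK (1/ω^2) with hKdef
  have hx0 : 0 < x := by positivity
  have hxinv : x = ω^2/(ω^2-1) := by
    rw [hxdef, show 1 - 1/ω^2 = (ω^2-1)/ω^2 by field_simp, inv_div]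
  have hgx : g = Real.log x := by rw [hxdef, Real.log_inv, hgdef]
  have idS : gkpS L ω = (2*L^2/π) * (x * E - K) := by
    rw [gkpS, hxinv, hEdef, hKdef]
  have idN : gkpE L ω - gkpS L ω = (2*L^2/π) * (K - (ω/(ω+1)) * E) := by
    rw [gkpE, gkpS, ← hEdef, ← hKdef]
    have hne1 : ω^2 - 1 ≠ 0 := by nlinarith
    have hne2 : ω + 1 ≠ 0 := by nlinarith
    field_simp
    ring
  clear_value x g E K
  have hgle : g ≤ x - 1 := by rw [hgx]; exact Real.log_le_sub_one_of_pos hx0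
  have hE1 : 1 ≤ E := by rw [hEdef]; exact one_le_ellE _ hm1.le
  have hE2 : E ≤ π/2 := by rw [hEdef]; exact ellE_le _ (by positivity)
  have hK0 : 0 ≤ K := by rw [hKdef]; exact ellK_nonneg _
  have hKl : g/2 - 1 ≤ K := by
    have := ellK_lb hm hm1
    rw [hgdef]; rw [← hKdef] at this; linarith
  have hKu : K ≤ g/2 + Real.log 2 + π := by
    have := ellK_ub hm hm1
    rw [hgdef]; rw [← hKdef] at this; linarith
  have hT0 : 0 ≤ (ω/(ω+1)) * E := by positivity
  have hT1 : (ω/(ω+1)) * E ≤ π/2 := by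
    have h1' : ω/(ω+1) ≤ 1 := by rw [div_le_one (by linarith)]; linarith
    nlinarith
  have hxE : x ≤ x * E := le_mul_of_one_le_right hx0.le hE1
  have hxE2 : x * E ≤ x * (π/2) := mul_le_mul_of_nonneg_left hE2 hx0.le
  refine ⟨?_, ?_, ?_, ?_⟩
  · rw [idS]
    have hmain : x/2 + (1/2 - Real.log 2 - π) ≤ x * E - K := by linarith
    exact le_trans (le_of_eq (by ring)) (mul_le_mul_of_nonneg_left hmain hc.le)
  · rw [idS]
    have hmain : x * E - K ≤ x * (π/2) := by linarith
    have h := mul_le_mul_of_nonneg_left hmain hc.le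
    have heq : (2*L^2/π) * (x * (π/2)) = L^2 * x := by field_simp
    linarith
  · rw [idN]
    have hmain : g/2 - (1 + π/2) ≤ K - (ω/(ω+1)) * E := by linarith
    exact le_trans (le_of_eq (by ring)) (mul_le_mul_of_nonneg_left hmain hc.le)
  · rw [idN]
    have hmain : K - (ω/(ω+1)) * E ≤ g/2 + (Real.log 2 + π) := by linarith
    exact le_trans (mul_le_mul_of_nonneg_left hmain hc.le) (le_of_eq (by ring))

end Helpers

open Filter Topology

/-- In the long-string limit ω → 1⁺, the spin diverges, the anomalous
dimension E − S diverges, and logarithmic scaling holds: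
(E(ω) − S(ω))/ln S(ω) → √λ/π with √λ = L². -/
theorem gkp_long_string_log_scaling (L : ℝ) (hL : 0 < L) :
    Tendsto (fun ω => gkpS L ω) (𝓝[>] (1:ℝ)) atTop ∧
    Tendsto (fun ω => gkpE L ω - gkpS L ω) (𝓝[>] (1:ℝ)) atTop ∧
    Tendsto (fun ω => (gkpE L ω - gkpS L ω) / Real.log (gkpS L ω))
      (𝓝[>] (1:ℝ)) (𝓝 (L ^ 2 / π)) := by
  have hπ := Real.pi_pos
  have hc : 0 < 2*L^2/π := by positivity
  set l := 𝓝[>] (1:ℝ) with hldef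
  set c := 2*L^2/π with hcdef
  set d := fun ω : ℝ => 1 - 1/ω^2 with hddef
  set g := fun ω : ℝ => -Real.log (d ω) with hgdef
  -- eventual domain
  have hIoo : ∀ᶠ ω in l, ω ∈ Set.Ioo (1:ℝ) (9/8) :=
    Ioo_mem_nhdsGT_of_mem ⟨le_refl 1, by norm_num⟩
  -- d tends to 0 from the right
  have hd_nhds : Tendsto d (𝓝 1) (𝓝 0) := by
    have h1 : ContinuousAt d 1 := by
      exact ContinuousAt.sub continuousAt_const
        (ContinuousAt.div continuousAt_const (continuousAt_id.pow 2) (by norm_num))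
    have := h1.tendsto
    norm_num [hddef] at this ⊢
    convert this using 2
  have hd : Tendsto d l (𝓝[>] 0) := by
    rw [tendsto_nhdsWithin_iff]
    constructor
    · exact hd_nhds.mono_left nhdsWithin_le_nhds
    · filter_upwards [hIoo] with ω hω
      have h1 : (1:ℝ) < ω := hω.1
      have : 1/ω^2 < 1 := by
        rw [div_lt_one (by nlinarith : (0:ℝ) < ω^2)]; nlinarith
      simp only [hddef, Set.mem_Ioi]
      linarith
  have hx : Tendsto (fun ω => (d ω)⁻¹) l atTop := tendsto_inv_nhdsGT_zero.comp hd
  have hg : Tendsto g l atTop := by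
    have h1 : Tendsto (fun ω => Real.log (d ω)) l atBot :=
      Real.tendsto_log_nhdsGT_zero.comp hd
    exact tendsto_neg_atBot_atTop.comp h1
  have hginv : Tendsto (fun ω => (g ω)⁻¹) l (𝓝 0) := hg.inv_tendsto_atTop
  -- the four eventual bounds
  have hb : ∀ᶠ ω in l,
      (c/2) * (d ω)⁻¹ + c*(1/2 - Real.log 2 - π) ≤ gkpS L ω ∧
      gkpS L ω ≤ L^2 * (d ω)⁻¹ ∧
      (c/2) * g ω - c*(1 + π/2) ≤ gkpE L ω - gkpS L ω ∧
      gkpE L ω - gkpS L ω ≤ (c/2) * g ω + c*(Real.log 2 + π) := by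
    filter_upwards [hIoo] with ω hω
    exact perOmega L ω hL hω.1 hω.2
  -- Claim 1
  have claim1 : Tendsto (fun ω => gkpS L ω) l atTop := by
    apply tendsto_atTop_mono' l (hb.mono fun ω h => h.1)
    apply tendsto_atTop_add_const_right
    exact hx.const_mul_atTop (by positivity)
  -- Claim 2
  have claim2 : Tendsto (fun ω => gkpE L ω - gkpS L ω) l atTop := by
    apply tendsto_atTop_mono' l (hb.mono fun ω h => h.2.2.1)
    apply tendsto_atTop_add_const_right
    exact hg.const_mul_atTop (by positivity)
  refine ⟨claim1, claim2, ?_⟩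
  -- Claim 3
  have hg1 : ∀ᶠ ω in l, 1 ≤ g ω := hg.eventually_ge_atTop 1
  have hx1 : ∀ᶠ ω in l, 4 * (Real.log 2 + π) ≤ (d ω)⁻¹ := hx.eventually_ge_atTop _
  have hgbig : ∀ᶠ ω in l, 1 - Real.log (c/4) ≤ g ω := hg.eventually_ge_atTop _
  -- N/g → L²/π
  have hNg : Tendsto (fun ω => (gkpE L ω - gkpS L ω) / g ω) l (𝓝 (L^2/π)) := by
    have hlo : Tendsto (fun ω => c/2 + (-(c*(1 + π/2))) * (g ω)⁻¹) l (𝓝 (c/2)) := by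
      have := (tendsto_const_nhds : Tendsto (fun _ : ℝ => c/2) l (𝓝 (c/2))).add
        (hginv.const_mul (-(c*(1 + π/2))))
      simpa using this
    have hhi : Tendsto (fun ω => c/2 + (c*(Real.log 2 + π)) * (g ω)⁻¹) l (𝓝 (c/2)) := by
      have := (tendsto_const_nhds : Tendsto (fun _ : ℝ => c/2) l (𝓝 (c/2))).add
        (hginv.const_mul (c*(Real.log 2 + π)))
      simpa using this
    have hc2 : c/2 = L^2/π := by rw [hcdef]; ring
    rw [← hc2]
    apply tendsto_of_tendsto_of_tendsto_of_le_of_le' hlo hhi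
    · filter_upwards [hb, hg1] with ω h hg1'
      have hg0 : (0:ℝ) < g ω := by linarith
      have heq : c/2 + (-(c*(1 + π/2))) * (g ω)⁻¹ = ((c/2) * g ω - c*(1 + π/2)) / g ω := by
        field_simp <;> ring
      rw [heq]
      exact div_le_div_of_nonneg_right h.2.2.1 hg0.le
    · filter_upwards [hb, hg1] with ω h hg1'
      have hg0 : (0:ℝ) < g ω := by linarith
      have heq : c/2 + (c*(Real.log 2 + π)) * (g ω)⁻¹ = ((c/2) * g ω + c*(Real.log 2 + π)) / g ω := by
        field_simp <;> ring
      rw [heq]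
      exact div_le_div_of_nonneg_right h.2.2.2 hg0.le
  -- log S / g → 1
  have hSbound : ∀ᶠ ω in l, (c/4) * (d ω)⁻¹ ≤ gkpS L ω ∧ gkpS L ω ≤ L^2 * (d ω)⁻¹
      ∧ 0 < (d ω)⁻¹ ∧ Real.log ((d ω)⁻¹) = g ω := by
    filter_upwards [hb, hx1, hIoo] with ω h hx1' hω
    have hd0 : 0 < d ω := by
      have : 1/ω^2 < 1 := by
        rw [div_lt_one (by nlinarith [hω.1] : (0:ℝ) < ω^2)]
        nlinarith [hω.1]
      simp only [hddef]
      linarith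
    have hdi : 0 < (d ω)⁻¹ := by positivity
    refine ⟨?_, h.2.1, hdi, ?_⟩
    · have := h.1
      nlinarith [hc]
    · rw [Real.log_inv]
  have hlogS : Tendsto (fun ω => Real.log (gkpS L ω) / g ω) l (𝓝 1) := by
    have hlo : Tendsto (fun ω => 1 + Real.log (c/4) * (g ω)⁻¹) l (𝓝 1) := by
      have := (tendsto_const_nhds : Tendsto (fun _ : ℝ => (1:ℝ)) l (𝓝 1)).add
        (hginv.const_mul (Real.log (c/4)))
      simpa using this
    have hhi : Tendsto (fun ω => 1 + Real.log (L^2) * (g ω)⁻¹) l (𝓝 1) := by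
      have := (tendsto_const_nhds : Tendsto (fun _ : ℝ => (1:ℝ)) l (𝓝 1)).add
        (hginv.const_mul (Real.log (L^2)))
      simpa using this
    apply tendsto_of_tendsto_of_tendsto_of_le_of_le' hlo hhi
    · filter_upwards [hSbound, hg1] with ω h hg1'
      obtain ⟨hS1, hS2, hdi, hlg⟩ := h
      have hg0 : (0:ℝ) < g ω := by linarith
      have hSpos : 0 < gkpS L ω :=
        lt_of_lt_of_le (mul_pos (by linarith [hc] : (0:ℝ) < c/4) hdi) hS1
      have hloglo : Real.log (c/4) + g ω ≤ Real.log (gkpS L ω) := by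
        have h1 : Real.log ((c/4) * (d ω)⁻¹) ≤ Real.log (gkpS L ω) :=
          Real.log_le_log (by positivity) hS1
        rw [Real.log_mul (by positivity) (ne_of_gt hdi), hlg] at h1
        linarith
      have heq : 1 + Real.log (c/4) * (g ω)⁻¹ = (Real.log (c/4) + g ω) / g ω := by
        field_simp <;> ring
      rw [heq]
      exact div_le_div_of_nonneg_right hloglo hg0.le
    · filter_upwards [hSbound, hg1] with ω h hg1'
      obtain ⟨hS1, hS2, hdi, hlg⟩ := h
      have hg0 : (0:ℝ) < g ω := by linarith
      have hSpos : 0 < gkpS L ω :=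
        lt_of_lt_of_le (mul_pos (by linarith [hc] : (0:ℝ) < c/4) hdi) hS1
      have hloghi : Real.log (gkpS L ω) ≤ Real.log (L^2) + g ω := by
        have h1 : Real.log (gkpS L ω) ≤ Real.log (L^2 * (d ω)⁻¹) :=
          Real.log_le_log hSpos hS2
        rw [Real.log_mul (by positivity) (ne_of_gt hdi), hlg] at h1
        linarith
      have heq : 1 + Real.log (L^2) * (g ω)⁻¹ = (Real.log (L^2) + g ω) / g ω := by
        field_simp <;> ring
      rw [heq]
      exact div_le_div_of_nonneg_right hloghi hg0.le
  -- combine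
  have hdiv := hNg.div hlogS one_ne_zero
  rw [div_one] at hdiv
  apply hdiv.congr'
  filter_upwards [hSbound, hg1, hgbig] with ω h hg1' hgbig'
  obtain ⟨hS1, hS2, hdi, hlg⟩ := h
  have hg0 : (0:ℝ) < g ω := by linarith
  have hSpos : 0 < gkpS L ω :=
    lt_of_lt_of_le (mul_pos (by linarith [hc] : (0:ℝ) < c/4) hdi) hS1
  have hlogpos : 0 < Real.log (gkpS L ω) := by
    have h1 : Real.log ((c/4) * (d ω)⁻¹) ≤ Real.log (gkpS L ω) :=
      Real.log_le_log (by positivity) hS1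
    rw [Real.log_mul (by positivity) (ne_of_gt hdi), hlg] at h1
    linarith
  rw [Pi.div_apply]
  field_simp
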